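/- Let q be a prime power and let f : F_q^k → {0, 1, …, k} be the Hamming weight function f(u) = wt(u), and let t_d ≤ t_f be natural numbers. Suppose there exists a systematic [n, k] linear code over F_q with minimum distance at least 2t_d + 1. Then r_f(k, t_d, t_f) ≤ n − k + N(2t_f + 1, 2(t_f − t_d)), where N(λ, D) is the minimum length of a q-ary code with λ codewords and pairwise Hamming distance at least D. -/

import Mathlib

/-- An `(f, t_d, t_f)`-FCC (with `d_d = 2t_d+1`, `d_f = 2t_f+1`). -/
def IsFCC {F S : Type*} [Fintype F] [DecidableEq F] {k r : ℕ}
    (f : (Fin k → F) → S) (dd df : ℕ)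
    (c : (Fin k → F) → (Fin (k + r) → F)) : Prop :=
  (∀ u i, c u (Fin.castAdd r i) = u i) ∧
  (∀ u v, u ≠ v → dd ≤ hammingDist (c u) (c v)) ∧
  (∀ u v, f u ≠ f v → df ≤ hammingDist (c u) (c v))

/-- The optimal redundancy `r_f(k, t_d, t_f)`. -/
noncomputable def optRedundancy {F S : Type*} [Fintype F] [DecidableEq F] {k : ℕ}
    (f : (Fin k → F) → S) (dd df : ℕ) : ℕ :=
  sInf {r : ℕ | ∃ c : (Fin k → F) → (Fin (k + r) → F), IsFCC f dd df c}

/-- `N(M, d)`: the minimum length of a code over `F` with `M` codewords and pairwise Hamming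
distance at least `d`. -/
noncomputable def Ncode (F : Type*) [Fintype F] [DecidableEq F] (M d : ℕ) : ℕ :=
  sInf {n : ℕ | ∃ p : Fin M → Fin n → F, ∀ i j, i ≠ j → d ≤ hammingDist (p i) (p j)}

section Aux

variable {F : Type*} [DecidableEq F]

lemma hammingDist_comp_equiv' {ι κ : Type*} [Fintype ι] [Fintype κ] (e : ι ≃ κ)
    (x y : κ → F) : hammingDist (x ∘ e) (y ∘ e) = hammingDist x y := by
  unfold hammingDist
  apply Finset.card_bij (fun i _ => e i)
  · intro a ha; simpa using ha
  · intro a _ b _ h; exact e.injective h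
  · intro b hb; exact ⟨e.symm b, by simpa using hb, by simp⟩

lemma hammingDist_sumElim' {ι κ : Type*} [Fintype ι] [Fintype κ]
    (a a' : ι → F) (b b' : κ → F) :
    hammingDist (Sum.elim a b) (Sum.elim a' b') = hammingDist a a' + hammingDist b b' := by
  unfold hammingDist
  rw [← Fintype.card_subtype, ← Fintype.card_subtype, ← Fintype.card_subtype,
    ← Fintype.card_sum]
  exact Fintype.card_congr (Equiv.subtypeSum)

lemma hammingNorm_le_add {ι : Type*} [Fintype ι] [AddGroup F] (u v : ι → F) :
    hammingNorm u ≤ hammingDist u v + hammingNorm v := by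
  rw [← hammingDist_zero_right, ← hammingDist_zero_right]
  exact hammingDist_triangle u v 0

end Aux

/-- For the Hamming weight function `f(u) = wt(u)` on `F_q^k`, `t_d ≤ t_f`,
and a systematic `[n, k]` linear code over `F_q` of minimum distance at least `2t_d+1`,
`r_f(k, t_d, t_f) ≤ n − k + N(2t_f + 1, 2(t_f − t_d))`. -/
theorem optRedundancy_le_hammingWeight
    {F : Type*} [Field F] [Fintype F] [DecidableEq F]
    {k n : ℕ} (hkn : k ≤ n) (td tf : ℕ) (htdtf : td ≤ tf)
    (C : (Fin k → F) →ₗ[F] (Fin n → F)) (hCinj : Function.Injective C)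
    (hCsys : ∀ (u : Fin k → F) (i : Fin k), C u (Fin.castLE hkn i) = u i)
    (hCdist : ∀ u v : Fin k → F, u ≠ v → 2 * td + 1 ≤ hammingDist (C u) (C v)) :
    optRedundancy (fun u : Fin k → F => hammingNorm u) (2 * td + 1) (2 * tf + 1) ≤
      n - k + Ncode F (2 * tf + 1) (2 * (tf - td)) := by

  set M : ℕ := 2 * tf + 1 with hM
  set D : ℕ := 2 * (tf - td) with hD
  -- the set defining Ncode is nonempty
  have hne : {n : ℕ | ∃ p : Fin M → Fin n → F,
      ∀ i j, i ≠ j → D ≤ hammingDist (p i) (p j)}.Nonempty := by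
    refine ⟨D * M, fun i j => if ((j : ℕ) / D : ℕ) = (i : ℕ) then 1 else 0, ?_⟩
    intro i j hij
    rcases Nat.eq_zero_or_pos D with hD0 | hD0
    · simp [hD0]
    have hcard : D = (Finset.univ : Finset (Fin D)).card := by simp
    unfold hammingDist
    conv_lhs => rw [hcard]
    apply Finset.card_le_card_of_injOn
      (fun t : Fin D => (⟨D * (i : ℕ) + (t : ℕ), by
        have h1 : D * (i : ℕ) + (t : ℕ) < D * ((i : ℕ) + 1) := by
          have := t.isLt
          rw [Nat.mul_add, Nat.mul_one]; omega
        exact lt_of_lt_of_le h1 (Nat.mul_le_mul_left D i.isLt)⟩ : Fin (D * M)))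
    · intro t _
      simp only [Finset.mem_filter, Finset.mem_univ, true_and]
      have hdiv : (D * (i : ℕ) + (t : ℕ)) / D = (i : ℕ) := by
        rw [Nat.mul_add_div hD0, Nat.div_eq_of_lt t.isLt]
        omega
      have hji : (i : ℕ) ≠ (j : ℕ) := fun h => hij (Fin.ext h)
      simp [hdiv, hji, Ne.symm hji]
    · intro t _ t' _ h
      have := congrArg Fin.val h
      simp only at this
      exact Fin.ext (by omega)
  -- a code attaining Ncode
  obtain ⟨p, hp⟩ := Nat.sInf_mem hne
  set m : ℕ := Ncode F M D with hm
  -- residue map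
  have hMpos : 0 < M := by omega
  set res : (Fin k → F) → Fin M := fun u => ⟨hammingNorm u % M, Nat.mod_lt _ hMpos⟩ with hres
  -- the equivalence
  have hkr : k + ((n - k) + m) = n + m := by omega
  set e : Fin (k + ((n - k) + m)) ≃ Fin n ⊕ Fin m :=
    (finCongr hkr).trans finSumFinEquiv.symm with he
  set c : (Fin k → F) → (Fin (k + ((n - k) + m)) → F) :=
    fun u => Sum.elim (C u) (p (res u)) ∘ e with hc
  -- distance formula
  have hdist : ∀ u v, hammingDist (c u) (c v) =
      hammingDist (C u) (C v) + hammingDist (p (res u)) (p (res v)) := by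
    intro u v
    rw [hc]
    exact (hammingDist_comp_equiv' e _ _).trans (hammingDist_sumElim' _ _ _ _)
  -- weight distance bound
  have hwt : ∀ u v : Fin k → F, hammingNorm u ≠ hammingNorm v →
      hammingNorm u % M = hammingNorm v % M → M ≤ hammingDist (C u) (C v) := by
    intro u v hne' hmod
    have huv : hammingDist u v ≤ hammingDist (C u) (C v) := by
      unfold hammingDist
      apply Finset.card_le_card_of_injOn (fun i => Fin.castLE hkn i)
      · intro i hi
        simp only [Finset.mem_coe, Finset.mem_filter, Finset.mem_univ, true_and] at hi ⊢
        rw [hCsys u i, hCsys v i]; exact hi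
      · intro a _ b _ h; exact Fin.castLE_injective hkn h
    have h1 := hammingNorm_le_add u v
    have h2 := hammingNorm_le_add v u
    rw [hammingDist_comm] at h2
    have hMle : M ≤ hammingDist u v := by
      rcases lt_or_gt_of_ne hne' with hlt | hlt
      · have hdvd : M ∣ hammingNorm v - hammingNorm u :=
          (Nat.modEq_iff_dvd' hlt.le).mp hmod
        have := Nat.le_of_dvd (by omega) hdvd
        omega
      · have hdvd : M ∣ hammingNorm u - hammingNorm v :=
          (Nat.modEq_iff_dvd' hlt.le).mp hmod.symm
        have := Nat.le_of_dvd (by omega) hdvd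
        omega
    omega
  -- conclude
  have hmem : ((n - k) + m) ∈ {r : ℕ | ∃ c : (Fin k → F) → (Fin (k + r) → F),
      IsFCC (fun u : Fin k → F => hammingNorm u) (2 * td + 1) (2 * tf + 1) c} := by
    refine ⟨c, ?_, ?_, ?_⟩
    · intro u i
      have he1 : e (Fin.castAdd ((n - k) + m) i) = Sum.inl (Fin.castLE hkn i) := by
        have : (finCongr hkr) (Fin.castAdd ((n - k) + m) i)
            = Fin.castAdd m (Fin.castLE hkn i) := rfl
        rw [he, Equiv.trans_apply, this, finSumFinEquiv_symm_apply_castAdd]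
      rw [hc]
      simp only [Function.comp_apply, he1, Sum.elim_inl]
      exact (congrArg (fun x : Fin n ⊕ Fin m => Sum.elim (C u) (p (res u)) x) he1).trans (hCsys u i)
    · intro u v huv
      rw [hdist]
      exact le_trans (hCdist u v huv) (Nat.le_add_right _ _)
    · intro u v hfuv
      simp only [ne_eq] at hfuv
      have huv : u ≠ v := fun h => hfuv (by rw [h])
      rw [hdist]
      by_cases hrr : res u = res v
      · have hmod : hammingNorm u % M = hammingNorm v % M := by
          have := congrArg Fin.val hrr
          simpa [hres] using this
        have := hwt u v hfuv hmod
        have := hCdist u v huv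
        omega
      · have h1 := hCdist u v huv
        have h2 := hp (res u) (res v) hrr
        omega
  calc optRedundancy (fun u : Fin k → F => hammingNorm u) (2 * td + 1) (2 * tf + 1)
      ≤ (n - k) + m := Nat.sInf_le hmem
    _ = n - k + Ncode F (2 * tf + 1) (2 * (tf - td)) := by rw [hm]
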